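/- If a connected graph G contains a universal vertex (a vertex adjacent to all other vertices), then χ_pcf(G) ≤ χ(G) + 2. -/

import Mathlib

open SimpleGraph

/-- A proper conflict-free coloring: proper, and every non-isolated vertex has a color
appearing exactly once in its open neighborhood. -/
def IsPCFColoring {V : Type*} (G : SimpleGraph V) {n : ℕ} (c : V → Fin n) : Prop :=
  (∀ u v, G.Adj u v → c u ≠ c v) ∧
  ∀ v : V, (G.neighborSet v).Nonempty →
    ∃ k : Fin n, ∃! u, u ∈ G.neighborSet v ∧ c u = k

/-- The PCF chromatic number. -/
noncomputable def pcfChromNum {V : Type*} (G : SimpleGraph V) : ℕ :=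
  sInf {n | ∃ c : V → Fin n, IsPCFColoring G c}

/-- The chromatic number (as a natural number). -/
noncomputable def chromNum {V : Type*} (G : SimpleGraph V) : ℕ :=
  sInf {n | G.Colorable n}
theorem pcf_le_chrom_add_two_of_universal {V : Type*} [Fintype V] (G : SimpleGraph V)
    (hG : G.Connected) (huniv : ∃ v : V, ∀ w : V, w ≠ v → G.Adj v w) :
    pcfChromNum G ≤ chromNum G + 2 := by
  classical
  obtain ⟨v, hv⟩ := huniv
  set n := chromNum G with hn
  have hcolset : {m | G.Colorable m}.Nonempty := ⟨Fintype.card V, G.colorable_of_fintype⟩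
  have hcol : G.Colorable n := Nat.sInf_mem hcolset
  obtain ⟨C⟩ := hcol
  apply Nat.sInf_le
  by_cases hne : ∃ u : V, u ≠ v
  · obtain ⟨u, hu⟩ := hne
    set c' : V → Fin (n + 2) := fun w =>
      if w = v then ⟨n, by omega⟩ else if w = u then ⟨n + 1, by omega⟩
      else Fin.castLE (by omega) (C w) with hc'
    have hval : ∀ w : V, w ≠ v → w ≠ u → ((c' w : Fin (n+2)) : ℕ) = (C w : ℕ) := by
      intro w h1 h2; simp [hc', h1, h2]
    have hlt : ∀ w : V, w ≠ v → w ≠ u → ((c' w : Fin (n+2)) : ℕ) < n := by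
      intro w h1 h2; rw [hval w h1 h2]; exact (C w).isLt
    have hvv : ((c' v : Fin (n+2)) : ℕ) = n := by simp [hc']
    have hvu : ((c' u : Fin (n+2)) : ℕ) = n + 1 := by simp [hc', hu]
    refine ⟨c', ?_, ?_⟩
    · intro a b hab hEq
      have hEq' : ((c' a : Fin (n+2)) : ℕ) = ((c' b : Fin (n+2)) : ℕ) := congrArg Fin.val hEq
      have hab' : a ≠ b := hab.ne
      by_cases hav : a = v
      · have hbv : b ≠ v := fun h => hab' (hav.trans h.symm)
        rw [hav, hvv] at hEq'
        by_cases hbu : b = u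
        · rw [hbu, hvu] at hEq'; omega
        · have := hlt b hbv hbu; omega
      · by_cases hbv : b = v
        · rw [hbv, hvv] at hEq'
          by_cases hau : a = u
          · rw [hau, hvu] at hEq'; omega
          · have := hlt a hav hau; omega
        · by_cases hau : a = u
          · have hbu : b ≠ u := fun h => hab' (hau.trans h.symm)
            rw [hau, hvu] at hEq'
            have := hlt b hbv hbu; omega
          · by_cases hbu : b = u
            · rw [hbu, hvu] at hEq'
              have := hlt a hav hau; omega
            · rw [hval a hav hau, hval b hbv hbu] at hEq'
              exact C.valid hab (Fin.ext hEq')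
    · intro w _
      by_cases hwv : w = v
      · subst hwv
        refine ⟨c' u, u, ⟨hv u hu, rfl⟩, ?_⟩
        rintro x ⟨hx1, hx2⟩
        by_cases hxu : x = u
        · exact hxu
        · exfalso
          have hxv : x ≠ w := fun h => G.irrefl (h ▸ hx1)
          have h2 := congrArg Fin.val hx2
          rw [hval x hxv hxu, hvu] at h2
          have := (C x).isLt; omega
      · refine ⟨c' v, v, ⟨G.adj_symm (hv w hwv), rfl⟩, ?_⟩
        rintro x ⟨hx1, hx2⟩
        by_cases hxv : x = v
        · exact hxv
        · exfalso
          have h2 := congrArg Fin.val hx2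
          rw [hvv] at h2
          by_cases hxu : x = u
          · rw [hxu, hvu] at h2; omega
          · rw [hval x hxv hxu] at h2
            have := (C x).isLt; omega
  · push_neg at hne
    refine ⟨fun _ => ⟨0, by omega⟩, ?_, ?_⟩
    · intro a b hab
      exact absurd ((hne a).trans (hne b).symm) hab.ne
    · intro w ⟨x, hx⟩
      exact absurd ((hne x).trans (hne w).symm) (G.ne_of_adj (G.adj_symm hx))
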